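/- Achievability sufficiency (Cover): in the binary prediction setting, let φ : {0,1}^n → ℝ satisfy the balance condition 2^{−n} ∑_{y∈{0,1}^n} φ(y) = n/2 and the stability condition |φ_t(y_1,…,y_{t−1},0) − φ_t(y_1,…,y_{t−1},1)| ≤ 1 for all 1 ≤ t ≤ n and all (y_1,…,y_{t−1}) ∈ {0,1}^{t−1}, where φ_t(y_1,…,y_t) := 2^{−(n−t)} ∑_{z∈{0,1}^{n−t}} φ(y_1,…,y_t,z). Then the predictor a_t(y_1,…,y_{t−1}) := (1 + φ_t(y_1,…,y_{t−1},0) − φ_t(y_1,…,y_{t−1},1))/2 takes values in [0,1] and achieves φ exactly: ∑_{t=1}^n |a_t(y_1,…,y_{t−1}) − y_t| = φ(y) for every y ∈ {0,1}^n. -/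

import Mathlib

/-- `splice t m y z` agrees with `y` on coordinates `≤ t` and continues with the bits
`z : Fin m → Bool` on coordinates `t+1, …, t+m` (and `0` beyond). -/
def splice (t m : ℕ) (y : ℕ → ℕ) (z : Fin m → Bool) : ℕ → ℕ :=
  fun i => if i ≤ t then y i
    else if h : i - t - 1 < m then (if z ⟨i - t - 1, h⟩ then 1 else 0) else 0

/-- `condExp n φ t y` is `φ_t(y₁,…,y_t)`: the average of `φ` over the `2^{n-t}`
uniformly random completions of the prefix `(y₁, …, y_t)` to a length-`n` bit sequence. -/
noncomputable def condExp (n : ℕ) (φ : (ℕ → ℕ) → ℝ) (t : ℕ) (y : ℕ → ℕ) : ℝ :=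
  ((2 : ℝ) ^ (n - t))⁻¹ * ∑ z : Fin (n - t) → Bool, φ (splice t (n - t) y z)

lemma splice_cons (t m : ℕ) (ht : 1 ≤ t) (y : ℕ → ℕ) (b : Bool) (g : Fin m → Bool) :
    splice (t - 1) (m + 1) y (Fin.cons b g) =
      splice t m (Function.update y t (if b then 1 else 0)) g := by
  funext i
  simp only [splice]
  rcases lt_trichotomy i t with h | heq | h
  · rw [if_pos (by omega), if_pos (by omega), Function.update_of_ne (by omega)]
  · subst heq
    rw [if_neg (by omega), if_pos le_rfl, Function.update_self,
      dif_pos (show i - (i - 1) - 1 < m + 1 by omega)]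
    have : (⟨i - (i - 1) - 1, by omega⟩ : Fin (m + 1)) = 0 := by
      ext; simp; omega
    rw [this, Fin.cons_zero]
  · rw [if_neg (by omega), if_neg (by omega)]
    by_cases hm : i - t - 1 < m
    · rw [dif_pos (show i - (t - 1) - 1 < m + 1 by omega), dif_pos hm]
      have : (⟨i - (t - 1) - 1, by omega⟩ : Fin (m + 1)) =
          Fin.succ ⟨i - t - 1, hm⟩ := by
        ext; simp; omega
      rw [this, Fin.cons_succ]
    · rw [dif_neg (by omega), dif_neg hm]

lemma condExp_rec (n t : ℕ) (ht : 1 ≤ t) (htn : t ≤ n) (φ : (ℕ → ℕ) → ℝ) (y : ℕ → ℕ) :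
    condExp n φ (t - 1) y =
      (condExp n φ t (Function.update y t 0) + condExp n φ t (Function.update y t 1)) / 2 := by
  have hm : n - (t - 1) = (n - t) + 1 := by omega
  simp only [condExp]
  rw [hm]
  set m := n - t with hmdef
  rw [← (Fin.consEquiv (fun _ : Fin (m + 1) => Bool)).sum_comp
    (fun z => φ (splice (t - 1) (m + 1) y z))]
  rw [Fintype.sum_prod_type]
  rw [Fintype.sum_bool]
  have h0 : ∀ g : Fin m → Bool, (Fin.consEquiv (fun _ : Fin (m + 1) => Bool)) (false, g) = Fin.cons false g := by
    intro g; rfl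
  have h1 : ∀ g : Fin m → Bool, (Fin.consEquiv (fun _ : Fin (m + 1) => Bool)) (true, g) = Fin.cons true g := by
    intro g; rfl
  simp only [h0, h1, splice_cons t m ht y, if_true, if_false, Bool.false_eq_true]
  rw [pow_succ]
  ring

lemma condExp_last (n : ℕ) (φ : (ℕ → ℕ) → ℝ)
    (hφdep : ∀ y y' : ℕ → ℕ, (∀ i ∈ Finset.Icc 1 n, y i = y' i) → φ y = φ y')
    (y : ℕ → ℕ) : condExp n φ n y = φ y := by
  unfold condExp
  rw [Nat.sub_self, pow_zero, inv_one, one_mul, Fintype.sum_unique]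
  apply hφdep
  intro i hi
  simp only [Finset.mem_Icc] at hi
  simp [splice, hi.2]

lemma condExp_zero (n : ℕ) (φ : (ℕ → ℕ) → ℝ)
    (hφdep : ∀ y y' : ℕ → ℕ, (∀ i ∈ Finset.Icc 1 n, y i = y' i) → φ y = φ y')
    (y : ℕ → ℕ) : condExp n φ 0 y = condExp n φ 0 (fun _ => 0) := by
  simp only [condExp, Nat.sub_zero]
  congr 1
  apply Finset.sum_congr rfl
  intro z _
  apply hφdep
  intro i hi
  simp only [Finset.mem_Icc] at hi
  simp [splice, show ¬ i ≤ 0 by omega]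

theorem achievability_sufficiency
    (n : ℕ) (hn : 1 ≤ n)
    (φ : (ℕ → ℕ) → ℝ)
    (hφdep : ∀ y y' : ℕ → ℕ, (∀ i ∈ Finset.Icc 1 n, y i = y' i) → φ y = φ y')
    (hbal : ((2 : ℝ) ^ n)⁻¹ * (∑ z : Fin n → Bool,
        φ (splice 0 n (fun _ => 0) z)) = (n : ℝ) / 2)
    (hstab : ∀ t ∈ Finset.Icc 1 n, ∀ y : ℕ → ℕ,
      (∀ i ∈ Finset.Icc 1 (t - 1), y i ≤ 1) →
      |condExp n φ t (Function.update y t 0) - condExp n φ t (Function.update y t 1)| ≤ 1)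
    (a : ℕ → (ℕ → ℕ) → ℝ)
    (ha : ∀ t (y : ℕ → ℕ), a t y =
      (1 + condExp n φ t (Function.update y t 0)
         - condExp n φ t (Function.update y t 1)) / 2) :
    (∀ t ∈ Finset.Icc 1 n, ∀ y : ℕ → ℕ,
        (∀ i ∈ Finset.Icc 1 (t - 1), y i ≤ 1) → a t y ∈ Set.Icc (0 : ℝ) 1)
    ∧ ∀ y : ℕ → ℕ, (∀ i ∈ Finset.Icc 1 n, y i ≤ 1) →
        ∑ t ∈ Finset.Icc 1 n, |a t y - (y t : ℝ)| = φ y := by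
  constructor
  · intro t ht y hy
    have habs := hstab t ht y hy
    rw [abs_le] at habs
    rw [ha, Set.mem_Icc]
    constructor <;> linarith [habs.1, habs.2]
  · intro y hy
    set F : ℕ → ℝ := fun t => condExp n φ t y with hF
    have key : ∀ t ∈ Finset.Icc 1 n, |a t y - (y t : ℝ)| = F t - F (t - 1) + 1 / 2 := by
      intro t ht
      simp only [Finset.mem_Icc] at ht
      have hy' : ∀ i ∈ Finset.Icc 1 (t - 1), y i ≤ 1 := by
        intro i hi
        simp only [Finset.mem_Icc] at hi
        exact hy i (Finset.mem_Icc.mpr ⟨hi.1, by omega⟩)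
      have habs := hstab t (Finset.mem_Icc.mpr ht) y hy'
      rw [abs_le] at habs
      have hrec : F (t - 1) =
          (condExp n φ t (Function.update y t 0) + condExp n φ t (Function.update y t 1)) / 2 :=
        condExp_rec n t ht.1 ht.2 φ y
      have hyt : y t = 0 ∨ y t = 1 := by
        have := hy t (Finset.mem_Icc.mpr ht); omega
      rcases hyt with h0 | h1
      · have hupd : Function.update y t 0 = y := by rw [← h0]; exact Function.update_eq_self t y
        have hFt : F t = condExp n φ t (Function.update y t 0) := by rw [hupd]
        rw [ha, h0, Nat.cast_zero, sub_zero, abs_of_nonneg (by linarith [habs.1])]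
        rw [hFt, hrec]; ring
      · have hupd : Function.update y t 1 = y := by rw [← h1]; exact Function.update_eq_self t y
        have hFt : F t = condExp n φ t (Function.update y t 1) := by rw [hupd]
        rw [ha, h1, Nat.cast_one, abs_of_nonpos (by linarith [habs.2])]
        rw [hFt, hrec]; ring
    rw [Finset.sum_congr rfl key, Finset.sum_add_distrib, Finset.sum_const,
      Nat.card_Icc]
    have htel : ∑ t ∈ Finset.Icc 1 n, (F t - F (t - 1)) =
        ∑ i ∈ Finset.range n, (F (i + 1) - F i) := by
      apply Finset.sum_nbij' (fun t => t - 1) (fun i => i + 1)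
      · intro t ht; simp only [Finset.mem_Icc] at ht; simp only [Finset.mem_range]; omega
      · intro i hi; simp only [Finset.mem_range] at hi; simp only [Finset.mem_Icc]; omega
      · intro t ht; simp only [Finset.mem_Icc] at ht; omega
      · intro i hi; omega
      · intro t ht; simp only [Finset.mem_Icc] at ht
        congr 1 <;> congr 1 <;> omega
    rw [htel, Finset.sum_range_sub F n]
    have hFn : F n = φ y := condExp_last n φ hφdep y
    have hF0 : F 0 = (n : ℝ) / 2 := by
      show condExp n φ 0 y = (n : ℝ) / 2
      rw [condExp_zero n φ hφdep y]
      simp only [condExp, Nat.sub_zero]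
      exact hbal
    rw [hFn, hF0]
    push_cast
    ring
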